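/- In the slab setting, let q₁ ≤ q₁^κ ≤ q₂^κ ≤ q₂ and q₁ ≤ q₁^λ ≤ q₂^λ ≤ q₂. If rₓ(q₁^κ, q₂^κ) ≤ rₓ(q₁^λ, q₂^λ) and q₂^κ ≥ q₂^λ, then r_y(q₁^κ, q₂^κ) ≤ r_y(q₁^λ, q₂^λ). -/

import Mathlib

open MeasureTheory ProbabilityTheory Real Filter
open scoped ENNReal NNReal

/-- The standard normal cumulative distribution function Φ. -/
noncomputable def Phi (t : ℝ) : ℝ := (gaussianReal 0 1 (Set.Iic t)).toReal

/-- The inverse Φ⁻¹ of the standard normal CDF (meaningful on (0,1)). -/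
noncomputable def PhiInv : ℝ → ℝ := Function.invFun Phi

/-- The Gaussian measure N(m, σ²I) on ℝ^d. -/
noncomputable def gaussianVec {d : ℕ} (m : Fin d → ℝ) (σ : ℝ) :
    Measure (Fin d → ℝ) :=
  Measure.pi fun i => gaussianReal (m i) (Real.toNNReal (σ ^ 2))

/-- Dot product on ℝ^d. -/
def dotp {d : ℕ} (a b : Fin d → ℝ) : ℝ := ∑ i, a i * b i

/-- Euclidean (ℓ₂) norm on ℝ^d. -/
noncomputable def l2norm {d : ℕ} (a : Fin d → ℝ) : ℝ := Real.sqrt (∑ i, a i ^ 2)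

/-- Φ⁻¹ extended to EReal with the conventions Φ⁻¹(0) = −∞, Φ⁻¹(1) = +∞. -/
noncomputable def PhiInvE (p : ℝ) : EReal :=
  if p ≤ 0 then ⊥ else if 1 ≤ p then ⊤ else ((PhiInv p : ℝ) : EReal)

/-- Φ extended to EReal with Φ(−∞) = 0 and Φ(+∞) = 1. -/
noncomputable def PhiE (e : EReal) : ℝ :=
  if e = ⊥ then 0 else if e = ⊤ then 1 else Phi e.toReal

/-- The slab C(a,b) = {z : σ‖δ‖₂ Φ⁻¹(1−b) < δᵀ(z−x) ≤ σ‖δ‖₂ Φ⁻¹(1−a)},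
with the conventions Φ⁻¹(0) = −∞ and Φ⁻¹(1) = +∞ (assuming σ‖δ‖₂ > 0, the
defining inequalities are stated for the normalized quantity δᵀ(z−x)/(σ‖δ‖₂)). -/
noncomputable def slab {d : ℕ} (σ : ℝ) (x δ : Fin d → ℝ) (a b : ℝ) :
    Set (Fin d → ℝ) :=
  {z | PhiInvE (1 - b) < ((dotp δ (z - x) / (σ * l2norm δ) : ℝ) : EReal) ∧
      ((dotp δ (z - x) / (σ * l2norm δ) : ℝ) : EReal) ≤ PhiInvE (1 - a)}

/-! ### Auxiliary lemmas -/

lemma Phi_eq_integral (t : ℝ) : Phi t = ∫ x in Set.Iic t, gaussianPDFReal 0 1 x := by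
  rw [Phi, gaussianReal_apply_eq_integral 0 one_ne_zero,
    ENNReal.toReal_ofReal (integral_nonneg fun _ => gaussianPDFReal_nonneg _ _ _)]

lemma Phi_sub_Phi (a b : ℝ) :
    Phi b - Phi a = ∫ x in a..b, gaussianPDFReal 0 1 x := by
  rw [Phi_eq_integral, Phi_eq_integral]
  exact intervalIntegral.integral_Iic_sub_Iic
    (integrable_gaussianPDFReal 0 1).integrableOn
    (integrable_gaussianPDFReal 0 1).integrableOn

lemma Phi_strictMono : StrictMono Phi := by
  intro a b hab
  have h := intervalIntegral.intervalIntegral_pos_of_pos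
    ((integrable_gaussianPDFReal 0 1).intervalIntegrable)
    (fun t => gaussianPDFReal_pos 0 1 t one_ne_zero) hab
  rw [← Phi_sub_Phi] at h
  linarith

lemma Phi_continuous : Continuous Phi := by
  have h : Phi = fun t => Phi 0 + ∫ x in (0:ℝ)..t, gaussianPDFReal 0 1 x := by
    funext t
    rw [← Phi_sub_Phi]
    ring
  rw [h]
  exact continuous_const.add ((integrable_gaussianPDFReal 0 1).continuous_primitive 0)

lemma Phi_eq_cdf (t : ℝ) : Phi t = cdf (gaussianReal 0 1) t := (cdf_eq_real _ t).symm

lemma Phi_surj {p : ℝ} (h0 : 0 < p) (h1 : p < 1) : ∃ t, Phi t = p := by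
  have hbot : Tendsto Phi atBot (nhds 0) := by
    have : Phi = cdf (gaussianReal 0 1) := funext Phi_eq_cdf
    rw [this]; exact tendsto_cdf_atBot _
  have htop : Tendsto Phi atTop (nhds 1) := by
    have : Phi = cdf (gaussianReal 0 1) := funext Phi_eq_cdf
    rw [this]; exact tendsto_cdf_atTop _
  obtain ⟨a, ha⟩ := (hbot.eventually_lt_const h0).exists
  obtain ⟨b, hb⟩ := (htop.eventually_const_lt h1).exists
  exact intermediate_value_univ a b Phi_continuous ⟨ha.le, hb.le⟩

lemma Phi_phiInv {p : ℝ} (h0 : 0 < p) (h1 : p < 1) : Phi (PhiInv p) = p := by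
  obtain ⟨t, ht⟩ := Phi_surj h0 h1
  exact Function.invFun_eq ⟨t, ht⟩

lemma PhiInvE_mono : Monotone PhiInvE := by
  intro p q hpq
  by_cases hp0 : p ≤ 0
  · simp [PhiInvE, hp0]
  have h0p : 0 < p := lt_of_not_ge hp0
  have h0q : 0 < q := lt_of_lt_of_le h0p hpq
  by_cases hp1 : 1 ≤ p
  · have hq1 : 1 ≤ q := hp1.trans hpq
    simp [PhiInvE, hp0, hp1, hq1, not_le.mpr h0q]
  by_cases hq1 : 1 ≤ q
  · simp only [PhiInvE, if_neg hp0, if_neg hp1, if_neg (not_le.mpr h0q), if_pos hq1]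
    exact le_top
  simp only [PhiInvE, if_neg hp0, if_neg hp1, if_neg (not_le.mpr h0q), if_neg hq1]
  have key : PhiInv p ≤ PhiInv q := by
    apply Phi_strictMono.le_iff_le.mp
    rw [Phi_phiInv h0p (lt_of_not_ge hp1), Phi_phiInv h0q (lt_of_not_ge hq1)]
    exact hpq
  exact_mod_cast key

lemma lintegral_pi_prod {ι : Type*} [Fintype ι] [DecidableEq ι]
    (μ : ι → Measure ℝ) [∀ i, SigmaFinite (μ i)] (f : ι → ℝ → ℝ≥0∞)
    (hf : ∀ i, Measurable (f i)) :
    ∫⁻ z, ∏ i, f i (z i) ∂Measure.pi μ = ∏ i, ∫⁻ t, f i t ∂μ i := by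
  have hF : Measurable fun z : ι → ℝ => ∏ i, f i (z i) :=
    Finset.measurable_prod _ fun i _ => (hf i).comp (measurable_pi_apply i)
  have key : ∀ s : Finset ι, ∀ x : ι → ℝ,
      (∫⋯∫⁻_s, (fun z => ∏ i, f i (z i)) ∂μ) x
        = (∏ i ∈ s, ∫⁻ t, f i t ∂μ i) * ∏ i ∈ sᶜ, f i (x i) := by
    intro s
    induction s using Finset.induction with
    | empty => intro x; simp [lmarginal_empty, Finset.compl_empty]
    | @insert i s hi ih =>
      intro x
      rw [lmarginal_insert _ hF hi]
      have hisc : i ∈ sᶜ := Finset.mem_compl.mpr hi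
      have step : ∀ t : ℝ,
          (∫⋯∫⁻_s, (fun z => ∏ i, f i (z i)) ∂μ) (Function.update x i t)
          = ((∏ j ∈ s, ∫⁻ u, f j u ∂μ j) * ∏ j ∈ sᶜ.erase i, f j (x j)) * f i t := by
        intro t
        rw [ih]
        rw [← Finset.prod_erase_mul _ _ hisc]
        have hupd : ∀ j ∈ sᶜ.erase i,
            f j (Function.update x i t j) = f j (x j) := by
          intro j hj
          rw [Function.update_of_ne (Finset.ne_of_mem_erase hj)]
        rw [Finset.prod_congr rfl hupd, Function.update_self]
        ring
      simp_rw [step]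
      rw [lintegral_const_mul _ (hf i), Finset.prod_insert hi, Finset.compl_insert]
      ring
  rw [lintegral_eq_lmarginal_univ (μ := μ) (fun _ => (0:ℝ)), key Finset.univ (fun _ => 0)]
  simp

lemma gaussianVec_eq_withDensity {d : ℕ} (m : Fin d → ℝ) {σ : ℝ} (hσ : 0 < σ) :
    gaussianVec m σ = (volume : Measure (Fin d → ℝ)).withDensity
      (fun z => ∏ i, gaussianPDF (m i) (Real.toNNReal (σ ^ 2)) (z i)) := by
  have hv : Real.toNNReal (σ ^ 2) ≠ 0 := by
    rw [Ne, Real.toNNReal_eq_zero]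
    exact not_le.mpr (by positivity)
  rw [gaussianVec]
  refine (Measure.pi_eq (μ := fun i => gaussianReal (m i) (Real.toNNReal (σ ^ 2))) fun s hs => ?_)
  rw [withDensity_apply _ (MeasurableSet.univ_pi hs)]
  rw [← lintegral_indicator (MeasurableSet.univ_pi hs)]
  have hind : ∀ z : Fin d → ℝ,
      (Set.pi Set.univ s).indicator
        (fun z => ∏ i, gaussianPDF (m i) (Real.toNNReal (σ ^ 2)) (z i)) z
      = ∏ i, (s i).indicator (gaussianPDF (m i) (Real.toNNReal (σ ^ 2))) (z i) := by
    intro z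
    by_cases hz : z ∈ Set.pi Set.univ s
    · rw [Set.indicator_of_mem hz]
      exact Finset.prod_congr rfl fun i _ =>
        (Set.indicator_of_mem (hz i (Set.mem_univ i)) _).symm
    · rw [Set.indicator_of_notMem hz]
      rw [Set.mem_univ_pi] at hz
      push_neg at hz
      obtain ⟨i, hzi⟩ := hz
      symm
      apply Finset.prod_eq_zero (Finset.mem_univ i)
      rw [Set.indicator_of_notMem hzi]
  simp_rw [hind]
  rw [MeasureTheory.volume_pi,
    lintegral_pi_prod _ _ (fun i => (measurable_gaussianPDF _ _).indicator (hs i))]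
  refine Finset.prod_congr rfl fun i _ => ?_
  rw [lintegral_indicator (hs i), gaussianReal_apply _ hv]

lemma prod_gaussianPDF_shift {d : ℕ} (x δ : Fin d → ℝ) {σ : ℝ} (hσ : 0 < σ)
    (z : Fin d → ℝ) :
    (∏ i, gaussianPDF (x i + δ i) (Real.toNNReal (σ ^ 2)) (z i))
      = ENNReal.ofReal (Real.exp ((2 * dotp δ (z - x) - dotp δ δ) / (2 * σ ^ 2)))
        * ∏ i, gaussianPDF (x i) (Real.toNNReal (σ ^ 2)) (z i) := by
  have hσ2 : (0:ℝ) < σ ^ 2 := by positivity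
  have hvc : ((Real.toNNReal (σ ^ 2) : ℝ≥0) : ℝ) = σ ^ 2 := Real.coe_toNNReal _ (sq_nonneg σ)
  have hfac : ∀ i, gaussianPDFReal (x i + δ i) (Real.toNNReal (σ ^ 2)) (z i)
      = Real.exp ((2 * (δ i * (z i - x i)) - δ i * δ i) / (2 * σ ^ 2))
        * gaussianPDFReal (x i) (Real.toNNReal (σ ^ 2)) (z i) := by
    intro i
    rw [gaussianPDFReal, gaussianPDFReal, hvc]
    have he : -(z i - (x i + δ i)) ^ 2 / (2 * σ ^ 2)
        = (2 * (δ i * (z i - x i)) - δ i * δ i) / (2 * σ ^ 2)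
          + -(z i - x i) ^ 2 / (2 * σ ^ 2) := by
      field_simp
      ring
    rw [he, Real.exp_add]
    ring
  simp only [gaussianPDF]
  rw [← ENNReal.ofReal_prod_of_nonneg (fun i _ => gaussianPDFReal_nonneg _ _ _),
    ← ENNReal.ofReal_prod_of_nonneg (fun i _ => gaussianPDFReal_nonneg _ _ _),
    ← ENNReal.ofReal_mul (Real.exp_nonneg _)]
  congr 1
  rw [Finset.prod_congr rfl (fun i _ => hfac i), Finset.prod_mul_distrib,
    ← Real.exp_sum]
  congr 2
  rw [← Finset.sum_div]
  congr 1
  have hdot : dotp δ (z - x) = ∑ i, δ i * (z i - x i) := by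
    simp [dotp]
  rw [hdot, dotp, Finset.sum_sub_distrib, ← Finset.mul_sum]

lemma prod_gaussianPDF_measurable {d : ℕ} (m : Fin d → ℝ) (v : NNReal) :
    Measurable fun z : Fin d → ℝ => ∏ i, gaussianPDF (m i) v (z i) :=
  Finset.measurable_prod _ fun i _ =>
    (measurable_gaussianPDF _ _).comp (measurable_pi_apply i)

lemma prod_gaussianPDF_ne_zero {d : ℕ} (m : Fin d → ℝ) {σ : ℝ} (hσ : 0 < σ)
    (z : Fin d → ℝ) : (∏ i, gaussianPDF (m i) (Real.toNNReal (σ ^ 2)) (z i)) ≠ 0 := by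
  have hv : Real.toNNReal (σ ^ 2) ≠ 0 := by
    rw [Ne, Real.toNNReal_eq_zero]
    exact not_le.mpr (by positivity)
  exact Finset.prod_ne_zero_iff.mpr fun i _ => (gaussianPDF_pos _ hv _).ne'

lemma gaussianVec_null_iff {d : ℕ} (m : Fin d → ℝ) {σ : ℝ} (hσ : 0 < σ)
    {S : Set (Fin d → ℝ)} (hS : MeasurableSet S) :
    gaussianVec m σ S = 0 ↔ volume S = 0 := by
  rw [gaussianVec_eq_withDensity m hσ, withDensity_apply _ hS]
  constructor
  · intro h
    rw [setLIntegral_eq_zero_iff hS (prod_gaussianPDF_measurable m _)] at h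
    refine measure_eq_zero_iff_ae_notMem.mpr ?_
    filter_upwards [h] with z hz
    intro hzS
    exact prod_gaussianPDF_ne_zero m hσ z (hz hzS)
  · intro h
    exact setLIntegral_measure_zero _ _ h

lemma gaussianVec_le_mul {d : ℕ} {σ : ℝ} (hσ : 0 < σ) (x δ : Fin d → ℝ)
    {S : Set (Fin d → ℝ)} (hS : MeasurableSet S) {c : ℝ}
    (hle : ∀ z ∈ S, dotp δ (z - x) ≤ c) :
    gaussianVec (x + δ) σ S
      ≤ ENNReal.ofReal (Real.exp ((2 * c - dotp δ δ) / (2 * σ ^ 2)))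
        * gaussianVec x σ S := by
  rw [gaussianVec_eq_withDensity _ hσ, gaussianVec_eq_withDensity _ hσ,
    withDensity_apply _ hS, withDensity_apply _ hS,
    ← lintegral_const_mul _ (prod_gaussianPDF_measurable x _)]
  refine setLIntegral_mono ((prod_gaussianPDF_measurable x _).const_mul _) fun z hz => ?_
  have hzc := hle z hz
  have h1 : (∏ i, gaussianPDF ((x + δ) i) (Real.toNNReal (σ ^ 2)) (z i))
      = ENNReal.ofReal (Real.exp ((2 * dotp δ (z - x) - dotp δ δ) / (2 * σ ^ 2)))
        * ∏ i, gaussianPDF (x i) (Real.toNNReal (σ ^ 2)) (z i) := by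
    simp_rw [Pi.add_apply]
    exact prod_gaussianPDF_shift x δ hσ z
  rw [h1]
  refine mul_le_mul_left (ENNReal.ofReal_le_ofReal (Real.exp_le_exp.mpr ?_)) _
  gcongr

lemma gaussianVec_ge_mul {d : ℕ} {σ : ℝ} (hσ : 0 < σ) (x δ : Fin d → ℝ)
    {S : Set (Fin d → ℝ)} (hS : MeasurableSet S) {c : ℝ}
    (hge : ∀ z ∈ S, c ≤ dotp δ (z - x)) :
    ENNReal.ofReal (Real.exp ((2 * c - dotp δ δ) / (2 * σ ^ 2)))
        * gaussianVec x σ S ≤ gaussianVec (x + δ) σ S := by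
  rw [gaussianVec_eq_withDensity _ hσ, gaussianVec_eq_withDensity _ hσ,
    withDensity_apply _ hS, withDensity_apply _ hS,
    ← lintegral_const_mul _ (prod_gaussianPDF_measurable x _)]
  refine setLIntegral_mono (prod_gaussianPDF_measurable (x + δ) _) fun z hz => ?_
  have hzc := hge z hz
  have h1 : (∏ i, gaussianPDF ((x + δ) i) (Real.toNNReal (σ ^ 2)) (z i))
      = ENNReal.ofReal (Real.exp ((2 * dotp δ (z - x) - dotp δ δ) / (2 * σ ^ 2)))
        * ∏ i, gaussianPDF (x i) (Real.toNNReal (σ ^ 2)) (z i) := by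
    simp_rw [Pi.add_apply]
    exact prod_gaussianPDF_shift x δ hσ z
  rw [h1]
  refine mul_le_mul_left (ENNReal.ofReal_le_ofReal (Real.exp_le_exp.mpr ?_)) _
  gcongr

instance gaussianVec_prob {d : ℕ} (m : Fin d → ℝ) (σ : ℝ) :
    IsProbabilityMeasure (gaussianVec m σ) := by
  rw [gaussianVec]; infer_instance

lemma gaussianVec_compare_sets {d : ℕ} {σ : ℝ} (hσ : 0 < σ) (x δ : Fin d → ℝ)
    {A B : Set (Fin d → ℝ)} (hA : MeasurableSet A) (hB : MeasurableSet B)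
    (hXle : gaussianVec x σ A ≤ gaussianVec x σ B) (c : ℝ)
    (hAB : ∀ z ∈ A \ B, dotp δ (z - x) ≤ c)
    (hBA : ∀ z ∈ B \ A, c ≤ dotp δ (z - x)) :
    gaussianVec (x + δ) σ A ≤ gaussianVec (x + δ) σ B := by
  set μX := gaussianVec x σ
  set μY := gaussianVec (x + δ) σ
  have hXdiff : μX (A \ B) ≤ μX (B \ A) := by
    have h1 : μX (A ∩ B) + μX (A \ B) = μX A := measure_inter_add_diff A hB
    have h2 : μX (A ∩ B) + μX (B \ A) = μX B := by
      rw [Set.inter_comm]; exact measure_inter_add_diff B hA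
    have h3 : μX (A ∩ B) + μX (A \ B) ≤ μX (A ∩ B) + μX (B \ A) := by
      rw [h1, h2]; exact hXle
    exact (ENNReal.add_le_add_iff_left (measure_ne_top _ _)).mp h3
  have key : μY (A \ B) ≤ μY (B \ A) := by
    calc μY (A \ B)
        ≤ ENNReal.ofReal (Real.exp ((2 * c - dotp δ δ) / (2 * σ ^ 2))) * μX (A \ B) :=
          gaussianVec_le_mul hσ x δ (hA.diff hB) hAB
      _ ≤ ENNReal.ofReal (Real.exp ((2 * c - dotp δ δ) / (2 * σ ^ 2))) * μX (B \ A) :=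
          mul_le_mul_right hXdiff _
      _ ≤ μY (B \ A) := gaussianVec_ge_mul hσ x δ (hB.diff hA) hBA
  calc μY A = μY (A ∩ B) + μY (A \ B) := (measure_inter_add_diff A hB).symm
    _ ≤ μY (A ∩ B) + μY (B \ A) := add_le_add_right key _
    _ = μY B := by rw [Set.inter_comm]; exact measure_inter_add_diff B hA

/-- Lemma 5 of the paper (slab comparison): in the slab setting, with
C′ = C(q₁,q₂) \ ⋃ᵢ C(q₁ⁱ,q₂ⁱ), rₓ(a,b) = Pr(X ∈ C′ ∩ C(a,b)) and
r_y(a,b) = Pr(Y ∈ C′ ∩ C(a,b)): if rₓ(q₁ᵏ,q₂ᵏ) ≤ rₓ(q₁ˡ,q₂ˡ) and q₂ᵏ ≥ q₂ˡ,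
then r_y(q₁ᵏ,q₂ᵏ) ≤ r_y(q₁ˡ,q₂ˡ). -/
theorem slab_ratio_comparison
    {d : ℕ} (hd : 1 ≤ d) (σ : ℝ) (hσ : 0 < σ)
    (x δ : Fin d → ℝ) (hδ : δ ≠ 0)
    (q1 q2 : ℝ) (hq1 : 0 ≤ q1) (hq12 : q1 < q2) (hq2 : q2 ≤ 1)
    (n : ℕ) (e1 e2 : Fin n → ℝ)
    (he : ∀ i, q1 ≤ e1 i ∧ e1 i ≤ e2 i ∧ e2 i ≤ q2)
    (C' : Set (Fin d → ℝ))
    (hC' : C' = slab σ x δ q1 q2 \ ⋃ i, slab σ x δ (e1 i) (e2 i))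
    (rX rY : ℝ → ℝ → ℝ)
    (hrX : ∀ a b, rX a b = (gaussianVec x σ (C' ∩ slab σ x δ a b)).toReal)
    (hrY : ∀ a b, rY a b = (gaussianVec (x + δ) σ (C' ∩ slab σ x δ a b)).toReal)
    (q1k q2k q1l q2l : ℝ)
    (hkk : q1 ≤ q1k ∧ q1k ≤ q2k ∧ q2k ≤ q2)
    (hll : q1 ≤ q1l ∧ q1l ≤ q2l ∧ q2l ≤ q2)
    (hx : rX q1k q2k ≤ rX q1l q2l) (h2 : q2l ≤ q2k) :
    rY q1k q2k ≤ rY q1l q2l := by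
  -- positivity of the normalizing constant
  have hl2 : 0 < l2norm δ := by
    rw [l2norm]
    apply Real.sqrt_pos.mpr
    have hex : ∃ i, δ i ≠ 0 := by
      by_contra h
      push_neg at h
      exact hδ (funext h)
    obtain ⟨i, hi⟩ := hex
    exact Finset.sum_pos' (fun j _ => sq_nonneg _) ⟨i, Finset.mem_univ i, by positivity⟩
  have hN : 0 < σ * l2norm δ := mul_pos hσ hl2
  -- measurability
  have hdot : Measurable fun z : Fin d → ℝ => dotp δ (z - x) := by
    have h : (fun z : Fin d → ℝ => dotp δ (z - x)) = fun z => ∑ i, δ i * (z i - x i) := by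
      funext z; simp [dotp]
    rw [h]
    exact Finset.measurable_sum _ fun i _ =>
      measurable_const.mul ((measurable_pi_apply i).sub measurable_const)
  have hT : Measurable fun z : Fin d → ℝ =>
      ((dotp δ (z - x) / (σ * l2norm δ) : ℝ) : EReal) :=
    measurable_coe_real_ereal.comp (hdot.div_const _)
  have hslab : ∀ a b : ℝ, MeasurableSet (slab σ x δ a b) := by
    intro a b
    have h : slab σ x δ a b
        = (fun z : Fin d → ℝ => ((dotp δ (z - x) / (σ * l2norm δ) : ℝ) : EReal)) ⁻¹'
          (Set.Ioc (PhiInvE (1 - b)) (PhiInvE (1 - a))) := rfl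
    rw [h]
    exact hT measurableSet_Ioc
  have hC'm : MeasurableSet C' := by
    rw [hC']
    exact (hslab q1 q2).diff (MeasurableSet.iUnion fun i => hslab _ _)
  set A := C' ∩ slab σ x δ q1k q2k with hAdef
  set B := C' ∩ slab σ x δ q1l q2l with hBdef
  have hA : MeasurableSet A := hC'm.inter (hslab _ _)
  have hB : MeasurableSet B := hC'm.inter (hslab _ _)
  set μX := gaussianVec x σ with hμX
  set μY := gaussianVec (x + δ) σ with hμY
  -- convert hypothesis and goal to ENNReal
  rw [hrX, hrX] at hx
  have hxE : μX A ≤ μX B :=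
    (ENNReal.toReal_le_toReal (measure_ne_top _ _) (measure_ne_top _ _)).mp hx
  rw [hrY, hrY]
  refine ENNReal.toReal_mono (measure_ne_top _ _) ?_
  -- key endpoint inequality
  have hc2 : PhiInvE (1 - q2k) ≤ PhiInvE (1 - q2l) := PhiInvE_mono (by linarith)
  by_cases hcase : PhiInvE (1 - q1l) ≤ PhiInvE (1 - q1k)
  · -- B ⊆ A ; the X-hypothesis forces the difference to be null
    have hBsubA : B ⊆ A := by
      rintro z ⟨hzC, hz1, hz2⟩
      exact ⟨hzC, lt_of_le_of_lt hc2 hz1, hz2.trans hcase⟩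
    have hABnull : μX (A \ B) = 0 := by
      have h1 : μX (A ∩ B) + μX (A \ B) = μX A := measure_inter_add_diff A hB
      rw [Set.inter_eq_right.mpr hBsubA] at h1
      have hle : μX B + μX (A \ B) ≤ μX B + 0 := by
        rw [add_zero, h1]; exact hxE
      exact le_zero_iff.mp ((ENNReal.add_le_add_iff_left (measure_ne_top _ _)).mp hle)
    have hvolnull : volume (A \ B) = 0 :=
      (gaussianVec_null_iff x hσ (hA.diff hB)).mp hABnull
    have hYnull : μY (A \ B) = 0 :=
      (gaussianVec_null_iff (x + δ) hσ (hA.diff hB)).mpr hvolnull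
    calc μY A = μY (A ∩ B) + μY (A \ B) := (measure_inter_add_diff A hB).symm
      _ = μY B + 0 := by rw [Set.inter_eq_right.mpr hBsubA, hYnull]
      _ ≤ μY B := by rw [add_zero]
  · push_neg at hcase
    -- hcase : PhiInvE (1 - q1k) < PhiInvE (1 - q1l)
    by_cases hbot : PhiInvE (1 - q2l) = ⊥
    · -- A ⊆ B
      have hAsubB : A ⊆ B := by
        rintro z ⟨hzC, _, hz2⟩
        refine ⟨hzC, ?_, hz2.trans hcase.le⟩
        rw [hbot]
        exact EReal.bot_lt_coe _
      exact measure_mono hAsubB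
    by_cases htop : PhiInvE (1 - q2l) = ⊤
    · -- B is empty
      have hBempty : B = ∅ := by
        ext z
        simp only [Set.mem_empty_iff_false, iff_false]
        rintro ⟨_, hz1, _⟩
        rw [htop] at hz1
        exact (not_top_lt hz1)
      have hXA : μX A = 0 := by
        refine le_antisymm ?_ zero_le
        calc μX A ≤ μX B := hxE
          _ = 0 := by rw [hBempty]; exact measure_empty
      have hvolnull : volume A = 0 := (gaussianVec_null_iff x hσ hA).mp hXA
      have hYA : μY A = 0 := (gaussianVec_null_iff (x + δ) hσ hA).mpr hvolnull
      rw [hYA]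
      exact zero_le
    · -- the lower endpoint of slab L is a real number r; use the likelihood-ratio argument
      obtain ⟨r, hr⟩ : ∃ r : ℝ, PhiInvE (1 - q2l) = (r : EReal) := by
        cases h : PhiInvE (1 - q2l) with
        | bot => exact absurd h hbot
        | top => exact absurd h htop
        | coe r => exact ⟨r, rfl⟩
      refine gaussianVec_compare_sets hσ x δ hA hB hxE (r * (σ * l2norm δ)) ?_ ?_
      · rintro z ⟨⟨hzC, hz1, hz2⟩, hznB⟩
        have hzle : ((dotp δ (z - x) / (σ * l2norm δ) : ℝ) : EReal) ≤ PhiInvE (1 - q1l) :=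
          hz2.trans hcase.le
        have hznotlt : ¬ (PhiInvE (1 - q2l)
            < ((dotp δ (z - x) / (σ * l2norm δ) : ℝ) : EReal)) := by
          intro hlt
          exact hznB ⟨hzC, hlt, hzle⟩
        rw [hr] at hznotlt
        have : dotp δ (z - x) / (σ * l2norm δ) ≤ r := by
          exact_mod_cast not_lt.mp hznotlt
        calc dotp δ (z - x) = (dotp δ (z - x) / (σ * l2norm δ)) * (σ * l2norm δ) := by
              field_simp
          _ ≤ r * (σ * l2norm δ) := by
              exact mul_le_mul_of_nonneg_right this hN.le
      · rintro z ⟨⟨_, hz1, _⟩, _⟩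
        rw [hr] at hz1
        have : r < dotp δ (z - x) / (σ * l2norm δ) := by
          exact_mod_cast hz1
        calc r * (σ * l2norm δ)
            ≤ (dotp δ (z - x) / (σ * l2norm δ)) * (σ * l2norm δ) :=
              mul_le_mul_of_nonneg_right this.le hN.le
          _ = dotp δ (z - x) := by field_simp
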